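/- Let L be a Lie algebra over a field F and let b_1, …, b_n ∈ L be such that the operators ad(b_1), …, ad(b_n) pairwise commute and each b_i is a sandwich of L. Let U_k = U_k(ad(b_1), …, ad(b_n)) and suppose U_k = 0 for all k ≥ 3. Then: (1) for every s ≥ 1, all y_1, …, y_s ∈ L and all nonnegative integers i_1, …, i_s with i_1 + ⋯ + i_s ≥ s + 2, one has ((…((y_1 U_{i_1})·ad(y_2)) U_{i_2} …)·ad(y_s)) U_{i_s} = 0; (2) for every s ≥ 0, all y_1, …, y_s ∈ L and all nonnegative integers i_1, …, i_{s+1} with i_1 + ⋯ + i_{s+1} ≥ s + 3, the operator U_{i_1} · ad(y_1) · U_{i_2} · … · ad(y_s) · U_{i_{s+1}} is zero on L; (3) if i_1 + ⋯ + i_{s+1} ≥ s + 2 and there exists 1 ≤ k ≤ s − 2 with i_{k+1} = i_{k+2} = 0, then the operator U_{i_1} · ad(y_1) · … · ad(y_s) · U_{i_{s+1}} is zero on L. -/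

import Mathlib

/-- The divided-power operator `U_k(d_1, …, d_n)`: the sum over all `k`-element subsets
`{i_1 < … < i_k}` of `{1, …, n}` of the compositions `d_{i_1} ∘ ⋯ ∘ d_{i_k}`.
`U_0` is the identity and `U_k = 0` for `k > n`. -/
noncomputable def Uop {F : Type*} {A : Type*} [Field F] [AddCommGroup A] [Module F A]
    {n : ℕ} (d : Fin n → Module.End F A) (k : ℕ) : Module.End F A :=
  ∑ S ∈ Finset.powersetCard k (Finset.univ : Finset (Fin n)),
    ((S.sort (· ≤ ·)).map d).prod

/-- `b` is a sandwich of the Lie algebra `L`. -/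
def IsSandwich (F : Type*) {L : Type*} [Field F] [LieRing L] [LieAlgebra F L] (b : L) : Prop :=
  LieAlgebra.ad F L b * LieAlgebra.ad F L b = 0 ∧
    ∀ c : L, LieAlgebra.ad F L b * LieAlgebra.ad F L c * LieAlgebra.ad F L b = 0

/-- The element `((…((y_0 U_{i_0})·ad(y_1)) U_{i_1} …)·ad(y_s)) U_{i_s}` (0-based indices). -/
noncomputable def chainEl {F : Type*} {L : Type*} [Field F] [LieRing L] [LieAlgebra F L]
    {n : ℕ} (d : Fin n → Module.End F L) (y : ℕ → L) (i : ℕ → ℕ) : ℕ → L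
  | 0 => Uop d (i 0) (y 0)
  | j + 1 => Uop d (i (j + 1)) ⁅chainEl d y i j, y (j + 1)⁆

/-- The operator `U_{i_0} · ad(y_0) · U_{i_1} · … · ad(y_{s-1}) · U_{i_s}`, applied from
left to right (0-based indices). -/
noncomputable def opChain {F : Type*} {L : Type*} [Field F] [LieRing L] [LieAlgebra F L]
    {n : ℕ} (d : Fin n → Module.End F L) (y : ℕ → L) (i : ℕ → ℕ) : ℕ → Module.End F L
  | 0 => Uop d (i 0)
  | j + 1 => Uop d (i (j + 1)) * LieAlgebra.ad F L (y j) * opChain d y i j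

namespace SandwichAux

open Finset LieAlgebra

variable {F L : Type*} [Field F] [LieRing L] [LieAlgebra F L] {n : ℕ}
variable (d : Fin n → Module.End F L)

section Products

variable (hc : ∀ i j, Commute (d i) (d j))

/-- Product of the commuting family over a subset. -/
noncomputable def P (S : Finset (Fin n)) : Module.End F L :=
  S.noncommProd d fun i _ j _ _ => hc i j

lemma noncommProd_eq_list_prod {M : Type*} [Monoid M] (m : Multiset M) (l : List M)
    (h : m = ↑l) (hcomm) : m.noncommProd hcomm = l.prod := by
  subst h; exact Multiset.noncommProd_coe _ _

lemma Uop_eq (k : ℕ) :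
    Uop d k = ∑ S ∈ powersetCard k (univ : Finset (Fin n)), P d hc S := by
  refine Finset.sum_congr rfl fun S _ => ?_
  unfold P Finset.noncommProd
  exact (noncommProd_eq_list_prod _ _ (by
    rw [← Finset.sort_eq S (· ≤ ·), Multiset.map_coe]) _).symm

lemma P_empty : P d hc (∅ : Finset (Fin n)) = 1 :=
  Finset.noncommProd_empty _ _

lemma P_insert {j : Fin n} {S : Finset (Fin n)} (h : j ∉ S) :
    P d hc (insert j S) = d j * P d hc S :=
  Finset.noncommProd_insert_of_notMem _ _ _ _ h

lemma P_erase {j : Fin n} {S : Finset (Fin n)} (h : j ∈ S) :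
    P d hc S = d j * P d hc (S.erase j) :=
  (Finset.mul_noncommProd_erase S h d _).symm

lemma P_comm (j : Fin n) (S : Finset (Fin n)) : Commute (d j) (P d hc S) :=
  Finset.noncommProd_commute _ _ _ _ fun x _ => hc j x

lemma P_union {S T : Finset (Fin n)} (h : Disjoint S T) :
    P d hc (S ∪ T) = P d hc S * P d hc T :=
  Finset.noncommProd_union_of_disjoint h _ _

lemma P_overlap (hd2 : ∀ j, d j * d j = 0) {S T : Finset (Fin n)} (h : ¬ Disjoint S T) :
    P d hc S * P d hc T = 0 := by
  obtain ⟨j, hjS, hjT⟩ := Finset.not_disjoint_iff.mp h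
  rw [P_erase d hc hjS, P_erase d hc hjT]
  have hco : P d hc (S.erase j) * d j = d j * P d hc (S.erase j) :=
    ((P_comm d hc j (S.erase j)).symm).eq
  calc d j * P d hc (S.erase j) * (d j * P d hc (T.erase j))
      = d j * (P d hc (S.erase j) * d j * P d hc (T.erase j)) := by
        rw [mul_assoc, ← mul_assoc (P d hc (S.erase j))]
    _ = d j * (d j * P d hc (S.erase j) * P d hc (T.erase j)) := by rw [hco]
    _ = d j * d j * (P d hc (S.erase j) * P d hc (T.erase j)) := by
        rw [← mul_assoc, ← mul_assoc, mul_assoc (d j * d j)]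
    _ = 0 := by rw [hd2 j, zero_mul]

end Products

section Leibniz

variable (hc : ∀ i j, Commute (d i) (d j))

lemma dj_ad (had : ∀ j (x : L), ad F L (d j x) = d j * ad F L x - ad F L x * d j)
    (j : Fin n) (x : L) :
    d j * ad F L x = ad F L x * d j + ad F L (d j x) := by
  rw [had j x]; abel

lemma ad_dj_zero (hd2 : ∀ j, d j * d j = 0)
    (hsash : ∀ j (x : L), d j * ad F L x * d j = 0)
    (had : ∀ j (x : L), ad F L (d j x) = d j * ad F L x - ad F L x * d j)
    (j : Fin n) (x : L) : ad F L (d j x) * d j = 0 := by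
  rw [had j x, sub_mul, hsash j x, mul_assoc, hd2 j, mul_zero, sub_zero]

lemma leibniz (had : ∀ j (x : L), ad F L (d j x) = d j * ad F L x - ad F L x * d j)
    (y : L) (S : Finset (Fin n)) :
    P d hc S * ad F L y
      = ∑ T ∈ S.powerset, ad F L (P d hc T y) * P d hc (S \ T) := by
  classical
  induction S using Finset.induction_on with
  | empty =>
      simp [P_empty, Module.End.one_apply]
  | @insert j S hj ih =>
      rw [P_insert d hc hj, mul_assoc, ih, Finset.mul_sum, Finset.sum_powerset_insert hj]
      have key : ∀ T ∈ S.powerset,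
          d j * (ad F L (P d hc T y) * P d hc (S \ T))
            = ad F L (P d hc T y) * P d hc (insert j S \ T)
              + ad F L (P d hc (insert j T) y) * P d hc (insert j S \ insert j T) := by
        intro T hT
        rw [Finset.mem_powerset] at hT
        have hjT : j ∉ T := fun h => hj (hT h)
        have hjST : j ∉ S \ T := fun h => hj (Finset.mem_sdiff.mp h).1
        have h1 : insert j S \ T = insert j (S \ T) :=
          Finset.insert_sdiff_of_notMem _ hjT
        have h2 : insert j S \ insert j T = S \ T := by
          rw [Finset.insert_sdiff_insert]
          ext x
          simp only [Finset.mem_sdiff, Finset.mem_insert]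
          constructor
          · rintro ⟨hx, hx2⟩; exact ⟨hx, fun h => hx2 (Or.inr h)⟩
          · rintro ⟨hx, hx2⟩
            refine ⟨hx, ?_⟩
            rintro (rfl | h)
            · exact hj hx
            · exact hx2 h
        have h3 : P d hc (insert j T) y = d j (P d hc T y) := by
          rw [P_insert d hc hjT, Module.End.mul_apply]
        rw [h1, h2, h3, P_insert d hc hjST, ← mul_assoc, dj_ad d had, add_mul,
          mul_assoc]
      rw [Finset.sum_congr rfl key, Finset.sum_add_distrib]

end Leibniz

section Core

lemma core {M : Type*} [AddCommMonoid M] (g : Finset (Fin n) → Finset (Fin n) → M)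
    (hg : ∀ T V, ¬ Disjoint T V → g T V = 0) (a c : ℕ) :
    (∑ T ∈ powersetCard a (univ : Finset (Fin n)), ∑ V ∈ powersetCard c univ, g T V)
      = ∑ S ∈ powersetCard (a + c) (univ : Finset (Fin n)),
          ∑ T ∈ powersetCard a S, g T (S \ T) := by
  classical
  rw [← Finset.sum_product' (s := powersetCard a (univ : Finset (Fin n)))
      (t := powersetCard c univ) (f := fun T V => g T V)]
  rw [← Finset.sum_filter_of_ne
      (p := fun x : Finset (Fin n) × Finset (Fin n) => Disjoint x.1 x.2)
      (fun x _ hx => by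
        by_contra h
        exact hx (hg x.1 x.2 h))]
  rw [Finset.sum_sigma' (powersetCard (a + c) (univ : Finset (Fin n)))
      (fun S => powersetCard a S) (fun S T => g T (S \ T))]
  refine Finset.sum_nbij' (fun x => ⟨x.1 ∪ x.2, x.1⟩) (fun x => (x.2, x.1 \ x.2)) ?_ ?_ ?_ ?_ ?_
  · rintro ⟨T, V⟩ hx
    simp only [Finset.mem_filter, Finset.mem_product, Finset.mem_powersetCard] at hx
    obtain ⟨⟨⟨hT, hTc⟩, ⟨hV, hVc⟩⟩, hdisj⟩ := hx
    refine Finset.mem_sigma.mpr ⟨Finset.mem_powersetCard.mpr ⟨Finset.subset_univ _, ?_⟩,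
      Finset.mem_powersetCard.mpr ⟨Finset.subset_union_left, hTc⟩⟩
    rw [Finset.card_union_of_disjoint hdisj, hTc, hVc]
  · rintro ⟨S, T⟩ hx
    rw [Finset.mem_sigma] at hx
    obtain ⟨hS, hT⟩ := hx
    rw [Finset.mem_powersetCard] at hS hT
    simp only [Finset.mem_filter, Finset.mem_product, Finset.mem_powersetCard]
    refine ⟨⟨⟨Finset.subset_univ _, hT.2⟩, ⟨Finset.subset_univ _, ?_⟩⟩,
      Finset.disjoint_sdiff⟩
    have := Finset.card_sdiff_of_subset hT.1
    rw [this, hS.2, hT.2]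
    omega
  · rintro ⟨T, V⟩ hx
    simp only [Finset.mem_filter, Finset.mem_product] at hx
    simp only [Finset.union_sdiff_cancel_left hx.2]
  · rintro ⟨S, T⟩ hx
    rw [Finset.mem_sigma] at hx
    obtain ⟨hS, hT⟩ := hx
    rw [Finset.mem_powersetCard] at hT
    simp only [Finset.union_sdiff_of_subset hT.1]
  · rintro ⟨T, V⟩ hx
    simp only [Finset.mem_filter, Finset.mem_product] at hx
    simp only [Finset.union_sdiff_cancel_left hx.2]

end Core


section Identities

lemma G2 (hc : ∀ i j, Commute (d i) (d j)) (hd2 : ∀ j, d j * d j = 0)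
    (hsash : ∀ j (x : L), d j * ad F L x * d j = 0)
    (had : ∀ j (x : L), ad F L (d j x) = d j * ad F L x - ad F L x * d j)
    (m : ℕ) (y : L) :
    Uop d m * ad F L y = ∑ a ∈ range (m + 1), ad F L (Uop d a y) * Uop d (m - a) := by
  classical
  rw [Uop_eq d hc m, Finset.sum_mul]
  have step1 : ∀ S ∈ powersetCard m (univ : Finset (Fin n)),
      P d hc S * ad F L y
        = ∑ a ∈ range (m + 1), ∑ T ∈ powersetCard a S,
            ad F L (P d hc T y) * P d hc (S \ T) := by
    intro S hS
    have hcard : S.card = m := (Finset.mem_powersetCard.mp hS).2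
    rw [leibniz d hc had y S, Finset.sum_powerset, hcard]
  rw [Finset.sum_congr rfl step1, Finset.sum_comm]
  refine Finset.sum_congr rfl fun a ha => ?_
  rw [Finset.mem_range] at ha
  have hac : a + (m - a) = m := by omega
  rw [Uop_eq d hc a, Uop_eq d hc (m - a), LinearMap.sum_apply]
  rw [show (LieAlgebra.ad F L) (∑ S ∈ powersetCard a (univ : Finset (Fin n)), P d hc S y)
      = ∑ S ∈ powersetCard a (univ : Finset (Fin n)), ad F L (P d hc S y) from
    map_sum (LieAlgebra.ad F L : L →ₗ[F] Module.End F L) _ _, Finset.sum_mul]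
  rw [Finset.sum_congr rfl fun (T : Finset (Fin n)) _ => Finset.mul_sum
    (powersetCard (m - a) (univ : Finset (Fin n))) (fun V => P d hc V) (ad F L (P d hc T y))]
  have hgz : ∀ T V : Finset (Fin n), ¬ Disjoint T V →
      ad F L (P d hc T y) * P d hc V = 0 := by
    intro T V h
    obtain ⟨j, hjT, hjV⟩ := Finset.not_disjoint_iff.mp h
    have h1 : P d hc T y = d j (P d hc (T.erase j) y) := by
      rw [P_erase d hc hjT, Module.End.mul_apply]
    rw [h1, P_erase d hc hjV, ← mul_assoc, ad_dj_zero d hd2 hsash had, zero_mul]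
  rw [core (fun T V => ad F L (P d hc T y) * P d hc V) hgz a (m - a), hac]

lemma G3 (hc : ∀ i j, Commute (d i) (d j)) (hd2 : ∀ j, d j * d j = 0) (a c : ℕ) :
    Uop d a * Uop d c = ((a + c).choose a) • Uop d (a + c) := by
  classical
  rw [Uop_eq d hc a, Uop_eq d hc c, Finset.sum_mul]
  rw [Finset.sum_congr rfl fun (T : Finset (Fin n)) _ => Finset.mul_sum
    (powersetCard c (univ : Finset (Fin n))) (fun V => P d hc V) (P d hc T)]
  rw [core (fun T V => P d hc T * P d hc V)
    (fun T V h => P_overlap d hc hd2 h) a c]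
  rw [Uop_eq d hc (a + c), Finset.smul_sum]
  refine Finset.sum_congr rfl fun S hS => ?_
  have hcard : S.card = a + c := (Finset.mem_powersetCard.mp hS).2
  have hstep : ∀ T ∈ powersetCard a S, P d hc T * P d hc (S \ T) = P d hc S := by
    intro T hT
    obtain ⟨hsub, _⟩ := Finset.mem_powersetCard.mp hT
    rw [← P_union d hc Finset.disjoint_sdiff, Finset.union_sdiff_of_subset hsub]
  rw [Finset.sum_congr rfl hstep, Finset.sum_const, Finset.card_powersetCard, hcard]

end Identities


section OIdent

lemma U0 : Uop d (0 : ℕ) = 1 := by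
  simp [Uop, Finset.powersetCard_zero]

lemma I3 (hc : ∀ i j, Commute (d i) (d j)) (hd2 : ∀ j, d j * d j = 0)
    (hsash : ∀ j (x : L), d j * ad F L x * d j = 0)
    (had : ∀ j (x : L), ad F L (d j x) = d j * ad F L x - ad F L x * d j)
    (hU : ∀ k : ℕ, 3 ≤ k → Uop d k = 0) (y : L) :
    ad F L (Uop d 1 y) * Uop d 2 + ad F L (Uop d 2 y) * Uop d 1 = 0 := by
  have h0 := G2 d hc hd2 hsash had 3 y
  rw [hU 3 (by norm_num)] at h0
  simp only [Finset.sum_range_succ, Finset.sum_range_zero, zero_add, zero_mul] at h0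
  norm_num at h0
  rw [hU 3 (by norm_num), U0] at h0
  simp only [LinearMap.zero_apply, map_zero, zero_mul, mul_zero,
    add_zero, mul_one, zero_add] at h0
  exact h0.symm

lemma I4 (hc : ∀ i j, Commute (d i) (d j)) (hd2 : ∀ j, d j * d j = 0)
    (hsash : ∀ j (x : L), d j * ad F L x * d j = 0)
    (had : ∀ j (x : L), ad F L (d j x) = d j * ad F L x - ad F L x * d j)
    (hU : ∀ k : ℕ, 3 ≤ k → Uop d k = 0) (y : L) :
    ad F L (Uop d 2 y) * Uop d 2 = 0 := by
  have h0 := G2 d hc hd2 hsash had 4 y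
  rw [hU 4 (by norm_num)] at h0
  simp only [Finset.sum_range_succ, Finset.sum_range_zero, zero_add, zero_mul] at h0
  norm_num at h0
  rw [hU 4 (by norm_num), hU 3 (by norm_num), U0] at h0
  simp only [LinearMap.zero_apply, map_zero, zero_mul, mul_zero,
    add_zero, mul_one, zero_add] at h0
  exact h0.symm

lemma O5 (hc : ∀ i j, Commute (d i) (d j)) (hd2 : ∀ j, d j * d j = 0)
    (hsash : ∀ j (x : L), d j * ad F L x * d j = 0)
    (had : ∀ j (x : L), ad F L (d j x) = d j * ad F L x - ad F L x * d j)
    (hU : ∀ k : ℕ, 3 ≤ k → Uop d k = 0) (y : L) :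
    Uop d 2 * ad F L y * Uop d 2 = 0 := by
  have h2 := G2 d hc hd2 hsash had 2 y
  rw [h2, Finset.sum_mul]
  simp only [Finset.sum_range_succ, Finset.sum_range_zero, zero_add]
  norm_num
  have e0 : ad F L (Uop d 0 y) * Uop d 2 * Uop d 2
      = ad F L (Uop d 0 y) * (Uop d 2 * Uop d 2) := by rw [mul_assoc]
  have e1 : ad F L (Uop d 1 y) * Uop d 1 * Uop d 2
      = ad F L (Uop d 1 y) * (Uop d 1 * Uop d 2) := by rw [mul_assoc]
  have e2 : ad F L (Uop d 2 y) * Uop d 0 * Uop d 2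
      = ad F L (Uop d 2 y) * Uop d 2 := by rw [U0, mul_one]
  rw [e0, e1, e2, G3 d hc hd2 2 2, G3 d hc hd2 1 2]
  norm_num
  rw [hU 4 (by norm_num), hU 3 (by norm_num)]
  simp only [smul_zero, mul_zero, zero_add, add_zero]
  exact I4 d hc hd2 hsash had hU y

lemma O4 (hc : ∀ i j, Commute (d i) (d j)) (hd2 : ∀ j, d j * d j = 0)
    (hsash : ∀ j (x : L), d j * ad F L x * d j = 0)
    (had : ∀ j (x : L), ad F L (d j x) = d j * ad F L x - ad F L x * d j)
    (hU : ∀ k : ℕ, 3 ≤ k → Uop d k = 0) (y : L) :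
    Uop d 1 * ad F L y * Uop d 2 = Uop d 2 * ad F L y * Uop d 1 := by
  have h1 := G2 d hc hd2 hsash had 1 y
  have h2 := G2 d hc hd2 hsash had 2 y
  rw [h1, h2, Finset.sum_mul, Finset.sum_mul]
  simp only [Finset.sum_range_succ, Finset.sum_range_zero, zero_add]
  norm_num
  have eA : ad F L (Uop d 0 y) * Uop d 1 * Uop d 2
      = ad F L (Uop d 0 y) * (Uop d 1 * Uop d 2) := by rw [mul_assoc]
  have eB : ad F L (Uop d 0 y) * Uop d 2 * Uop d 1
      = ad F L (Uop d 0 y) * (Uop d 2 * Uop d 1) := by rw [mul_assoc]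
  have eC : ad F L (Uop d 1 y) * Uop d 1 * Uop d 1
      = ad F L (Uop d 1 y) * (Uop d 1 * Uop d 1) := by rw [mul_assoc]
  have eD : ad F L (Uop d 1 y) * Uop d 0 * Uop d 2
      = ad F L (Uop d 1 y) * Uop d 2 := by rw [U0, mul_one]
  have eE : ad F L (Uop d 2 y) * Uop d 0 * Uop d 1
      = ad F L (Uop d 2 y) * Uop d 1 := by rw [U0, mul_one]
  rw [eA, eB, eC, eD, eE, G3 d hc hd2 1 2, G3 d hc hd2 2 1, G3 d hc hd2 1 1]
  norm_num
  rw [hU 3 (by norm_num)]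
  simp only [smul_zero, mul_zero, zero_add, add_zero]
  have hI3 := I3 d hc hd2 hsash had hU y
  have hneg : ad F L (Uop d 2 y) * Uop d 1 = -(ad F L (Uop d 1 y) * Uop d 2) :=
    eq_neg_of_add_eq_zero_right hI3
  rw [hneg]
  noncomm_ring

end OIdent


section Mid

/-- `mid p t` is the operator `U_{i_{p+t}} · ad(y_{p+t-1}) · ⋯ · ad(y_p) · U_{i_p}`
(composition, rightmost applied first). -/
noncomputable def mid (y : ℕ → L) (i : ℕ → ℕ) (p : ℕ) : ℕ → Module.End F L
  | 0 => Uop d (i p)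
  | t + 1 => Uop d (i (p + t + 1)) * ad F L (y (p + t)) * mid y i p t

lemma mid_congr (y : ℕ → L) :
    ∀ (t : ℕ) {i i' : ℕ → ℕ} {p : ℕ}, (∀ j, p ≤ j → j ≤ p + t → i j = i' j) →
      mid d y i p t = mid d y i' p t := by
  intro t
  induction t with
  | zero => intro i i' p h; simp only [mid]; rw [h p le_rfl (by omega)]
  | succ t ih =>
      intro i i' p h
      simp only [mid]
      rw [h (p + t + 1) (by omega) (by omega), ih fun j h1 h2 => h j h1 (by omega)]

lemma opChain_eq_mid (y : ℕ → L) (i : ℕ → ℕ) :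
    ∀ s, opChain d y i s = mid d y i 0 s := by
  intro s
  induction s with
  | zero => rfl
  | succ s ih => rw [opChain, mid, ih]; simp

lemma mid_factor_left (y : ℕ → L) (i : ℕ → ℕ) :
    ∀ s q, q ≤ s → ∃ A, mid d y i 0 s = A * mid d y i 0 q := by
  intro s
  induction s with
  | zero =>
      intro q hq
      obtain rfl : q = 0 := by omega
      exact ⟨1, (one_mul _).symm⟩
  | succ s ih =>
      intro q hq
      rcases Nat.eq_or_lt_of_le hq with rfl | hlt
      · exact ⟨1, (one_mul _).symm⟩
      · obtain ⟨A, hA⟩ := ih q (by omega)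
        refine ⟨Uop d (i (0 + s + 1)) * ad F L (y (0 + s)) * A, ?_⟩
        rw [mid, hA, mul_assoc, mul_assoc, mul_assoc]

lemma mid_factor_right (y : ℕ → L) (i : ℕ → ℕ) :
    ∀ t p, ∃ B, mid d y i 0 (p + t) = mid d y i p t * B := by
  intro t
  induction t with
  | zero =>
      intro p
      cases p with
      | zero => exact ⟨1, (mul_one _).symm⟩
      | succ p' =>
          refine ⟨ad F L (y p') * mid d y i 0 p', ?_⟩
          show mid d y i 0 (p' + 1) = Uop d (i (p' + 1)) * _
          rw [mid, mul_assoc]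
          simp
  | succ t ih =>
      intro p
      obtain ⟨B, hB⟩ := ih p
      refine ⟨B, ?_⟩
      show mid d y i 0 ((p + t) + 1) = mid d y i p (t + 1) * B
      rw [mid, mid, hB, mul_assoc, mul_assoc, mul_assoc]
      simp

lemma mid_seg_zero
    (hO4 : ∀ z : L, Uop d 1 * ad F L z * Uop d 2 = Uop d 2 * ad F L z * Uop d 1)
    (hO5 : ∀ z : L, Uop d 2 * ad F L z * Uop d 2 = 0) (y : ℕ → L) :
    ∀ t (i : ℕ → ℕ) (p : ℕ), i p = 2 → i (p + t + 1) = 2 →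
      (∀ j, p < j → j < p + t + 1 → i j = 1) → mid d y i p (t + 1) = 0 := by
  intro t
  induction t with
  | zero =>
      intro i p h1 h2 _
      simp only [mid]
      rw [h1, h2, hO5]
  | succ t ih =>
      intro i p h1 h2 hmid
      have hm : i (p + t + 1) = 1 := hmid _ (by omega) (by omega)
      set i' := Function.update i (p + t + 1) 2 with hi'
      have congr_t : mid d y i p t = mid d y i' p t := by
        refine mid_congr d y t fun j hj1 hj2 => ?_
        rw [hi', Function.update_of_ne (by omega)]
      have hz : mid d y i' p (t + 1) = 0 := by
        refine ih i' p ?_ ?_ ?_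
        · rw [hi', Function.update_of_ne (by omega)]; exact h1
        · rw [hi', Function.update_self]
        · intro j hj1 hj2
          rw [hi', Function.update_of_ne (by omega)]
          exact hmid j hj1 (by omega)
      have hO4X : ∀ (z : L) (X : Module.End F L),
          Uop d 2 * (ad F L z * (Uop d 1 * X)) = Uop d 1 * (ad F L z * (Uop d 2 * X)) := by
        intro z X
        rw [← mul_assoc, ← mul_assoc, ← hO4 z, mul_assoc, mul_assoc]
      have key : Uop d 2 * (ad F L (y (p + t)) * mid d y i p t) = 0 := by
        rw [congr_t]
        have hstep : mid d y i' p (t + 1)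
            = Uop d 2 * (ad F L (y (p + t)) * mid d y i' p t) := by
          rw [mid, hi', Function.update_self, mul_assoc]
        rw [← hstep, hz]
      calc mid d y i p (t + 1 + 1)
          = Uop d 2 * (ad F L (y (p + (t + 1)))
              * (Uop d 1 * (ad F L (y (p + t)) * mid d y i p t))) := by
            rw [mid, mid, h2, hm]
            simp only [mul_assoc]
        _ = Uop d 1 * (ad F L (y (p + (t + 1)))
              * (Uop d 2 * (ad F L (y (p + t)) * mid d y i p t))) := hO4X _ _
        _ = 0 := by rw [key, mul_zero, mul_zero]

lemma opChain_zero_of_seg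
    (hO4 : ∀ z : L, Uop d 1 * ad F L z * Uop d 2 = Uop d 2 * ad F L z * Uop d 1)
    (hO5 : ∀ z : L, Uop d 2 * ad F L z * Uop d 2 = 0)
    (y : ℕ → L) (i : ℕ → ℕ) (s p t : ℕ) (hpt : p + t + 1 ≤ s)
    (h1 : i p = 2) (h2 : i (p + t + 1) = 2)
    (hmid : ∀ j, p < j → j < p + t + 1 → i j = 1) :
    opChain d y i s = 0 := by
  obtain ⟨A, hA⟩ := mid_factor_left d y i s (p + t + 1) hpt
  obtain ⟨B, hB⟩ := mid_factor_right d y i (t + 1) p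
  rw [show p + (t + 1) = p + t + 1 from rfl] at hB
  rw [opChain_eq_mid, hA, hB, mid_seg_zero d hO4 hO5 y t i p h1 h2 hmid, zero_mul, mul_zero]

lemma opChain_zero_of_big (hU : ∀ k : ℕ, 3 ≤ k → Uop d k = 0)
    (y : ℕ → L) (i : ℕ → ℕ) (s j : ℕ) (hj : j ≤ s) (h3 : 3 ≤ i j) :
    opChain d y i s = 0 := by
  obtain ⟨A, hA⟩ := mid_factor_left d y i s j hj
  obtain ⟨B, hB⟩ := mid_factor_right d y i 0 j
  rw [Nat.add_zero] at hB
  rw [opChain_eq_mid, hA, hB, show mid d y i j 0 = Uop d (i j) from rfl,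
    hU (i j) h3, zero_mul, mul_zero]

end Mid


section Comb

open Finset in
lemma sum_bound (s : ℕ) (i : ℕ → ℕ) (hle : ∀ j, j ≤ s → i j ≤ 2) :
    (∑ j ∈ range (s + 1), i j) + ((range (s + 1)).filter (fun j => i j = 0)).card
      ≤ (s + 1) + ((range (s + 1)).filter (fun j => i j = 2)).card := by
  classical
  rw [Finset.card_filter, Finset.card_filter, ← Finset.sum_add_distrib]
  have h1 : (s + 1) + ∑ j ∈ range (s + 1), (if i j = 2 then 1 else 0)
      = ∑ j ∈ range (s + 1), (1 + if i j = 2 then 1 else 0) := by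
    rw [Finset.sum_add_distrib, Finset.sum_const, Finset.card_range, smul_eq_mul, mul_one]
  rw [h1]
  refine Finset.sum_le_sum fun j hj => ?_
  have := hle j (by simpa using Nat.lt_succ_iff.mp (Finset.mem_range.mp hj))
  split_ifs <;> omega

open Finset in
lemma no_pair_bounds (s : ℕ) (i : ℕ → ℕ) (hle : ∀ j, j ≤ s → i j ≤ 2)
    (hnopair : ¬ ∃ p t, p + t + 1 ≤ s ∧ i p = 2 ∧ i (p + t + 1) = 2 ∧
      ∀ j, p < j → j < p + t + 1 → i j = 1) :
    ((range (s + 1)).filter (fun j => i j = 2)).card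
        ≤ ((range (s + 1)).filter (fun j => i j = 0)).card + 1 ∧
      (∀ k, k + 1 ≤ s → i k = 0 → i (k + 1) = 0 →
        ((range (s + 1)).filter (fun j => i j = 2)).card
          ≤ ((range (s + 1)).filter (fun j => i j = 0)).card) := by
  classical
  push_neg at hnopair
  set T := (range (s + 1)).filter (fun j => i j = 2) with hT
  set Z := (range (s + 1)).filter (fun j => i j = 0) with hZ
  have hmemT : ∀ {q}, q ∈ T ↔ (q ≤ s ∧ i q = 2) := by
    intro q; rw [hT, Finset.mem_filter, Finset.mem_range]
    exact ⟨fun ⟨a, b⟩ => ⟨by omega, b⟩, fun ⟨a, b⟩ => ⟨by omega, b⟩⟩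
  have hmemZ : ∀ {q}, q ∈ Z ↔ (q ≤ s ∧ i q = 0) := by
    intro q; rw [hZ, Finset.mem_filter, Finset.mem_range]
    exact ⟨fun ⟨a, b⟩ => ⟨by omega, b⟩, fun ⟨a, b⟩ => ⟨by omega, b⟩⟩
  have H' : ∀ m p q, q - p ≤ m → p < q → q ≤ s → i p = 2 → i q = 2 →
      ∃ z, p < z ∧ z < q ∧ i z = 0 := by
    intro m
    induction m with
    | zero => intro p q h hpq _ _ _; omega
    | succ m ih =>
        intro p q hqp hpq hqs hp hq
        obtain ⟨j, hj⟩ := hnopair p (q - p - 1) (by omega) hp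
          (by rw [show p + (q - p - 1) + 1 = q from by omega]; exact hq)
        rw [show p + (q - p - 1) + 1 = q from by omega] at hj
        obtain ⟨hj1, hj2, hj3⟩ := hj
        have hje : i j ≤ 2 := hle j (by omega)
        have : i j = 0 ∨ i j = 2 := by omega
        rcases this with h0 | h2
        · exact ⟨j, hj1, hj2, h0⟩
        · obtain ⟨z, hz1, hz2, hz3⟩ := ih p j (by omega) hj1 (by omega) hp h2
          exact ⟨z, hz1, by omega, hz3⟩
  rcases Finset.eq_empty_or_nonempty T with hTe | hTne
  · constructor
    · rw [hTe]; simp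
    · intro k _ _ _; rw [hTe]; simp
  · set M := T.max' hTne with hM
    have hMT : M ∈ T := Finset.max'_mem _ _
    set nxt : ℕ → ℕ := fun p =>
      if h : (T.filter (fun q => p < q)).Nonempty then (T.filter (fun q => p < q)).min' h
      else 0 with hnxt
    set f : ℕ → ℕ := fun p =>
      if h : (Z.filter (fun z => p < z)).Nonempty then (Z.filter (fun z => p < z)).min' h
      else 0 with hf
    have key : ∀ p ∈ T.erase M, f p ∈ Z ∧ p < f p ∧ f p < nxt p ∧
        ∀ q ∈ T, p < q → nxt p ≤ q := by
      intro p hp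
      have hpT : p ∈ T := Finset.mem_of_mem_erase hp
      have hpM : p ≠ M := Finset.ne_of_mem_erase hp
      have hpM' : p < M := lt_of_le_of_ne (Finset.le_max' _ _ hpT) hpM
      have hne : (T.filter (fun q => p < q)).Nonempty :=
        ⟨M, Finset.mem_filter.mpr ⟨hMT, hpM'⟩⟩
      have hnxtp : nxt p = (T.filter (fun q => p < q)).min' hne := by
        rw [hnxt]; exact dif_pos hne
      have hnpT : nxt p ∈ T ∧ p < nxt p := by
        have := Finset.min'_mem _ hne
        rw [← hnxtp] at this
        exact ⟨(Finset.mem_filter.mp this).1, (Finset.mem_filter.mp this).2⟩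
      have hmin : ∀ q ∈ T, p < q → nxt p ≤ q := by
        intro q hq hpq
        rw [hnxtp]
        exact Finset.min'_le _ _ (Finset.mem_filter.mpr ⟨hq, hpq⟩)
      obtain ⟨z, hz1, hz2, hz3⟩ := H' (nxt p - p) p (nxt p) le_rfl hnpT.2
        (hmemT.mp hnpT.1).1 (hmemT.mp hpT).2 (hmemT.mp hnpT.1).2
      have hnps : nxt p ≤ s := (hmemT.mp hnpT.1).1
      have hzZ : z ∈ Z := hmemZ.mpr ⟨by omega, hz3⟩
      have hneZ : (Z.filter (fun w => p < w)).Nonempty :=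
        ⟨z, Finset.mem_filter.mpr ⟨hzZ, hz1⟩⟩
      have hfp : f p = (Z.filter (fun w => p < w)).min' hneZ := by
        rw [hf]; exact dif_pos hneZ
      have hfpZ : f p ∈ Z ∧ p < f p := by
        have := Finset.min'_mem _ hneZ
        rw [← hfp] at this
        exact ⟨(Finset.mem_filter.mp this).1, (Finset.mem_filter.mp this).2⟩
      have hfpz : f p ≤ z := by
        rw [hfp]
        exact Finset.min'_le _ _ (Finset.mem_filter.mpr ⟨hzZ, hz1⟩)
      exact ⟨hfpZ.1, hfpZ.2, by omega, hmin⟩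
    have hinj : Set.InjOn f ↑(T.erase M) := by
      intro p hp p' hp' hfe
      by_contra hne
      rcases lt_or_gt_of_ne hne with hlt | hlt
      · obtain ⟨_, _, h3, h4⟩ := key p hp
        obtain ⟨_, h2', _, _⟩ := key p' hp'
        have := h4 p' (Finset.mem_of_mem_erase hp') hlt
        omega
      · obtain ⟨_, _, h3, h4⟩ := key p' hp'
        obtain ⟨_, h2', _, _⟩ := key p hp
        have := h4 p (Finset.mem_of_mem_erase hp) hlt
        omega
    have hcard1 : (T.erase M).card ≤ Z.card := by
      refine Finset.card_le_card_of_injOn f (fun p hp => (key p hp).1) hinj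
    have herase : (T.erase M).card = T.card - 1 := Finset.card_erase_of_mem hMT
    have hTc : 1 ≤ T.card := Finset.card_pos.mpr hTne
    refine ⟨by omega, ?_⟩
    intro k hk hk0 hk1
    have hkZ : k ∈ Z := hmemZ.mpr ⟨by omega, hk0⟩
    have hk1Z : k + 1 ∈ Z := hmemZ.mpr ⟨hk, hk1⟩
    have hZc : 1 ≤ Z.card := Finset.card_pos.mpr ⟨k, hkZ⟩
    by_cases hex : ∃ p ∈ T.erase M, f p = k
    · have hmiss : ∀ p ∈ T.erase M, f p ≠ k + 1 := by
        intro p hp hfp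
        obtain ⟨p0, hp0, hfp0⟩ := hex
        have hne : p0 ≠ p := by
          intro h; rw [h] at hfp0; omega
        rcases lt_or_gt_of_ne hne with hlt | hlt
        · obtain ⟨_, _, h3, h4⟩ := key p0 hp0
          obtain ⟨_, h2', _, _⟩ := key p hp
          have := h4 p (Finset.mem_of_mem_erase hp) hlt
          omega
        · obtain ⟨_, _, h3, h4⟩ := key p hp
          obtain ⟨_, h2', _, _⟩ := key p0 hp0
          have := h4 p0 (Finset.mem_of_mem_erase hp0) hlt
          omega
      have hcard2 : (T.erase M).card ≤ (Z.erase (k + 1)).card := by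
        refine Finset.card_le_card_of_injOn f
          (fun p hp => Finset.mem_erase.mpr ⟨hmiss p hp, (key p hp).1⟩) hinj
      have herase2 : (Z.erase (k + 1)).card = Z.card - 1 :=
        Finset.card_erase_of_mem hk1Z
      omega
    · push_neg at hex
      have hcard2 : (T.erase M).card ≤ (Z.erase k).card := by
        refine Finset.card_le_card_of_injOn f
          (fun p hp => Finset.mem_erase.mpr ⟨hex p hp, (key p hp).1⟩) hinj
      have herase2 : (Z.erase k).card = Z.card - 1 := Finset.card_erase_of_mem hkZ
      omega

end Comb


lemma chainEl_eq (y : ℕ → L) (i : ℕ → ℕ) :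
    ∀ m, chainEl d y i m
      = ((-1 : ℤ) ^ m) • (opChain d (fun j => y (j + 1)) i m) (y 0) := by
  intro m
  induction m with
  | zero => simp [chainEl, opChain]
  | succ m ih =>
      have hv : ⁅chainEl d y i m, y (m + 1)⁆
          = ((-1 : ℤ) ^ m) •
              (-(ad F L (y (m + 1)) ((opChain d (fun j => y (j + 1)) i m) (y 0)))) := by
        rw [ih, smul_lie, ← lie_skew, ← LieAlgebra.ad_apply (R := F)]
      rw [chainEl, hv, map_zsmul, map_neg]
      rw [opChain, Module.End.mul_apply, Module.End.mul_apply, pow_succ, mul_smul]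
      simp

end SandwichAux

/-- Vanishing properties of expressions built from `U_k = U_k(ad b_1, …, ad b_n)` for pairwise
ad-commuting sandwiches `b_i` when `U_k = 0` for all `k ≥ 3`. -/
theorem Uop_sandwich_vanishing
    {F : Type*} {L : Type*} [Field F] [LieRing L] [LieAlgebra F L]
    {n : ℕ} (b : Fin n → L)
    (hcomm : ∀ i j : Fin n, Commute (LieAlgebra.ad F L (b i)) (LieAlgebra.ad F L (b j)))
    (hsand : ∀ i : Fin n, IsSandwich F (b i))
    (hU : ∀ k : ℕ, 3 ≤ k → Uop (fun j => LieAlgebra.ad F L (b j)) k = 0) :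
    (∀ s : ℕ, 1 ≤ s → ∀ (y : ℕ → L) (i : ℕ → ℕ),
        s + 2 ≤ ∑ j ∈ Finset.range s, i j →
        chainEl (fun j => LieAlgebra.ad F L (b j)) y i (s - 1) = 0) ∧
    (∀ (s : ℕ) (y : ℕ → L) (i : ℕ → ℕ),
        s + 3 ≤ ∑ j ∈ Finset.range (s + 1), i j →
        opChain (fun j => LieAlgebra.ad F L (b j)) y i s = 0) ∧
    (∀ (s : ℕ) (y : ℕ → L) (i : ℕ → ℕ),
        s + 2 ≤ ∑ j ∈ Finset.range (s + 1), i j →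
        ∀ k : ℕ, 1 ≤ k → k ≤ s - 2 → i k = 0 → i (k + 1) = 0 →
        opChain (fun j => LieAlgebra.ad F L (b j)) y i s = 0) := by
  classical
  have hc : ∀ i j : Fin n, Commute (LieAlgebra.ad F L (b i)) (LieAlgebra.ad F L (b j)) := hcomm
  set d : Fin n → Module.End F L := fun j => LieAlgebra.ad F L (b j) with hd
  have hd2 : ∀ j, d j * d j = 0 := fun j => (hsand j).1
  have hsash : ∀ j (x : L), d j * LieAlgebra.ad F L x * d j = 0 := fun j x => (hsand j).2 x
  have had : ∀ j (x : L), LieAlgebra.ad F L (d j x)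
      = d j * LieAlgebra.ad F L x - LieAlgebra.ad F L x * d j := by
    intro j x
    letI : LieRing (Module.End F L) := LieRing.ofAssociativeRing
    have h := (LieAlgebra.ad F L).map_lie (b j) x
    rw [Ring.lie_def] at h
    simpa [hd, LieAlgebra.ad_apply] using h
  have hO4 := SandwichAux.O4 d hc hd2 hsash had hU
  have hO5 := SandwichAux.O5 d hc hd2 hsash had hU
  have claim2 : ∀ (s : ℕ) (y : ℕ → L) (i : ℕ → ℕ),
      s + 3 ≤ ∑ j ∈ Finset.range (s + 1), i j → opChain d y i s = 0 := by
    intro s y i hsum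
    by_cases hbig : ∃ j, j ≤ s ∧ 3 ≤ i j
    · obtain ⟨j, hj, h3⟩ := hbig
      exact SandwichAux.opChain_zero_of_big d hU y i s j hj h3
    · push_neg at hbig
      have hle : ∀ j, j ≤ s → i j ≤ 2 := fun j hj => by have := hbig j hj; omega
      by_cases hpair : ∃ p t, p + t + 1 ≤ s ∧ i p = 2 ∧ i (p + t + 1) = 2 ∧
          ∀ j, p < j → j < p + t + 1 → i j = 1
      · obtain ⟨p, t, h1, h2, h3, h4⟩ := hpair
        exact SandwichAux.opChain_zero_of_seg d hO4 hO5 y i s p t h1 h2 h3 h4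
      · exfalso
        have hb := (SandwichAux.no_pair_bounds s i hle hpair).1
        have hsb := SandwichAux.sum_bound s i hle
        omega
  have claim3 : ∀ (s : ℕ) (y : ℕ → L) (i : ℕ → ℕ),
      s + 2 ≤ ∑ j ∈ Finset.range (s + 1), i j →
      ∀ k : ℕ, 1 ≤ k → k ≤ s - 2 → i k = 0 → i (k + 1) = 0 → opChain d y i s = 0 := by
    intro s y i hsum k hk1 hk2 hk0 hk0'
    have hs3 : 3 ≤ s := by omega
    by_cases hbig : ∃ j, j ≤ s ∧ 3 ≤ i j
    · obtain ⟨j, hj, h3⟩ := hbig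
      exact SandwichAux.opChain_zero_of_big d hU y i s j hj h3
    · push_neg at hbig
      have hle : ∀ j, j ≤ s → i j ≤ 2 := fun j hj => by have := hbig j hj; omega
      by_cases hpair : ∃ p t, p + t + 1 ≤ s ∧ i p = 2 ∧ i (p + t + 1) = 2 ∧
          ∀ j, p < j → j < p + t + 1 → i j = 1
      · obtain ⟨p, t, h1, h2, h3, h4⟩ := hpair
        exact SandwichAux.opChain_zero_of_seg d hO4 hO5 y i s p t h1 h2 h3 h4
      · exfalso
        have hb := (SandwichAux.no_pair_bounds s i hle hpair).2 k (by omega) hk0 hk0'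
        have hsb := SandwichAux.sum_bound s i hle
        omega
  refine ⟨?_, claim2, claim3⟩
  intro s hs y i hsum
  obtain ⟨s', rfl⟩ : ∃ s', s = s' + 1 := ⟨s - 1, by omega⟩
  have hop : opChain d (fun j => y (j + 1)) i s' = 0 := by
    refine claim2 s' (fun j => y (j + 1)) i ?_
    have : Finset.range (s' + 1) = Finset.range (s' + 1) := rfl
    omega
  rw [show s' + 1 - 1 = s' from rfl, SandwichAux.chainEl_eq d y i s', hop]
  simp
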